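/- Let G be a group and let H be a finite-index subgroup of G. If H is LERF, then G is LERF. -/

import Mathlib

/-- A subgroup `S` of a group `G` is separable if for every `g ∈ G` with `g ∉ S` there
is a homomorphism `φ` from `G` to a finite group with `φ g ∉ φ(S)`. -/
def IsSeparableSubgroup {G : Type} [Group G] (S : Subgroup G) : Prop :=
  ∀ g : G, g ∉ S → ∃ (Q : Type) (_ : Group Q) (_ : Finite Q) (φ : G →* Q),
    φ g ∉ S.map φ

/-- A group is LERF (subgroup separable) if each of its finitely generated subgroups
is separable. -/
def IsLERF (G : Type) [Group G] : Prop :=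
  ∀ S : Subgroup G, S.FG → IsSeparableSubgroup S

/-- Separation via a finite-index normal subgroup implies separation via a finite quotient. -/
lemma sep_of_normal {G : Type} [Group G] {S : Subgroup G} {g : G}
    (N : Subgroup G) (hN : N.Normal) (hFI : N.FiniteIndex) (h : ∀ n ∈ N, g * n ∉ S) :
    ∃ (Q : Type) (_ : Group Q) (_ : Finite Q) (φ : G →* Q), φ g ∉ S.map φ := by
  haveI := hN; haveI := hFI
  refine ⟨G ⧸ N, inferInstance, inferInstance, QuotientGroup.mk' N, ?_⟩
  rintro ⟨s, hs, hmk⟩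
  have hmem : g⁻¹ * s ∈ N := by
    have : (QuotientGroup.mk g : G ⧸ N) = QuotientGroup.mk s := (hmk : _ = _).symm
    exact QuotientGroup.eq.mp this
  have heq : g * (g⁻¹ * s) = s := by group
  exact h _ hmem (by rw [heq]; exact hs)

/-- Separation via a finite quotient gives a finite-index normal subgroup separating. -/
lemma normal_of_sep {G : Type} [Group G] {S : Subgroup G} {g : G}
    (h : ∃ (Q : Type) (_ : Group Q) (_ : Finite Q) (φ : G →* Q), φ g ∉ S.map φ) :
    ∃ N : Subgroup G, N.Normal ∧ N.FiniteIndex ∧ ∀ n ∈ N, g * n ∉ S := by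
  obtain ⟨Q, _, _, φ, hφ⟩ := h
  refine ⟨φ.ker, inferInstance, inferInstance, fun n hn hgn => hφ ⟨g * n, hgn, ?_⟩⟩
  have hn1 : φ n = 1 := hn
  rw [map_mul, hn1, mul_one]

/-- If a group `G` has a finite-index subgroup `H` which is LERF, then `G` is LERF. -/
theorem lerf_of_finiteIndex_lerf
    {G : Type} [Group G] (H : Subgroup G) (hH : H.FiniteIndex)
    (hLERF : IsLERF ↥H) : IsLERF G := by
  intro S hSfg g hg
  haveI := hH
  -- `S ∩ H` viewed inside `H` is finitely generated
  haveI : Group.FG ↥S := (Group.fg_iff_subgroup_fg S).mpr hSfg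
  haveI : (H.subgroupOf S).FiniteIndex := inferInstance
  haveI hKfg : Group.FG ↥(H.subgroupOf S) := Subgroup.fg_of_index_ne_zero _
  have e1 : ↥((S ⊓ H).subgroupOf S) ≃* ↥(S ⊓ H) :=
    Subgroup.subgroupOfEquivOfLe inf_le_left
  have e2 : ↥((S ⊓ H).subgroupOf H) ≃* ↥(S ⊓ H) :=
    Subgroup.subgroupOfEquivOfLe inf_le_right
  haveI : Group.FG ↥((S ⊓ H).subgroupOf S) := by
    rwa [Subgroup.inf_subgroupOf_left]
  haveI : Group.FG ↥(S ⊓ H) :=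
    Group.fg_of_surjective (f := e1.toMonoidHom) e1.surjective
  haveI : Group.FG ↥((S ⊓ H).subgroupOf H) :=
    Group.fg_of_surjective (f := e2.symm.toMonoidHom) e2.symm.surjective
  have hT'fg : (S.subgroupOf H).FG := by
    rw [← Subgroup.inf_subgroupOf_right]
    exact (Group.fg_iff_subgroup_fg _).mp ‹_›
  -- finitely many coset representatives of `H ⊓ S` in `S`
  haveI : Finite (↥S ⧸ H.subgroupOf S) := Subgroup.finite_quotient_of_finiteIndex
  -- for each coset, a finite-index normal subgroup of `G` avoiding `g * n` in that coset
  have key : ∀ q : ↥S ⧸ H.subgroupOf S, ∃ N : Subgroup G, N.Normal ∧ N.FiniteIndex ∧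
      ∀ n ∈ N, ¬(g * n ∈ S ∧ ((q.out : ↥S) : G)⁻¹ * (g * n) ∈ H) := by
    intro q
    set s : G := ((q.out : ↥S) : G) with hs_def
    have hsS : s ∈ S := (q.out : ↥S).2
    by_cases hxH : s⁻¹ * g ∈ H
    · -- use LERF of H on `S.subgroupOf H`
      have hxT : (⟨s⁻¹ * g, hxH⟩ : ↥H) ∉ S.subgroupOf H := by
        intro hmem
        have hx : s⁻¹ * g ∈ S := hmem
        have : g = s * (s⁻¹ * g) := by group
        exact hg (this ▸ S.mul_mem hsS hx)
      obtain ⟨M, -, hMfi, hMsep⟩ := normal_of_sep (hLERF _ hT'fg _ hxT)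
      haveI := hMfi
      have hmaple : M.map H.subtype ≤ H := Subgroup.map_subtype_le M
      haveI hfi' : (M.map H.subtype).FiniteIndex := by
        constructor
        rw [← Subgroup.relIndex_mul_index hmaple]
        apply mul_ne_zero _ hH.index_ne_zero
        rw [Subgroup.relIndex, Subgroup.subgroupOf,
          Subgroup.comap_map_eq_self_of_injective H.subtype_injective]
        exact hMfi.index_ne_zero
      refine ⟨(M.map H.subtype).normalCore, inferInstance, inferInstance, ?_⟩
      rintro n hn ⟨hgnS, hcoset⟩
      have hnM' : n ∈ M.map H.subtype := Subgroup.normalCore_le _ hn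
      obtain ⟨m, hmM, hm⟩ := hnM'
      have hnH : n ∈ H := hmaple ⟨m, hmM, hm⟩
      have hxnS : s⁻¹ * (g * n) ∈ S := S.mul_mem (S.inv_mem hsS) hgnS
      have hxnH : s⁻¹ * (g * n) ∈ H := by rwa [hs_def] at hcoset
      apply hMsep m hmM
      show ((⟨s⁻¹ * g, hxH⟩ : ↥H) * m : ↥H) ∈ S.subgroupOf H
      have : (((⟨s⁻¹ * g, hxH⟩ : ↥H) * m : ↥H) : G) = s⁻¹ * (g * n) := by
        simp [← hm, Subgroup.coe_subtype, mul_assoc]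
      exact (Subgroup.mem_subgroupOf).mpr (by rw [this]; exact hxnS)
    · -- `s⁻¹ * g ∉ H`: use the normal core of `H`
      refine ⟨H.normalCore, inferInstance, inferInstance, ?_⟩
      rintro n hn ⟨-, hcoset⟩
      have hnH : n ∈ H := H.normalCore_le hn
      have : s⁻¹ * g = (s⁻¹ * (g * n)) * n⁻¹ := by group
      exact hxH (this ▸ H.mul_mem hcoset (H.inv_mem hnH))
  choose N hNnormal hNfi hNsep using key
  refine sep_of_normal (⨅ q, N q) ?_ (Subgroup.finiteIndex_iInf hNfi) ?_
  · constructor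
    intro n hn g'
    rw [Subgroup.mem_iInf] at hn ⊢
    exact fun q => (hNnormal q).conj_mem n (hn q) g'
  · intro n hn hgnS
    rw [Subgroup.mem_iInf] at hn
    set q : ↥S ⧸ H.subgroupOf S := QuotientGroup.mk (⟨g * n, hgnS⟩ : ↥S) with hq
    have hout : (QuotientGroup.mk q.out : ↥S ⧸ H.subgroupOf S) = q := QuotientGroup.out_eq' q
    have hcoset : (q.out)⁻¹ * (⟨g * n, hgnS⟩ : ↥S) ∈ H.subgroupOf S :=
      QuotientGroup.eq.mp (hout.trans hq)
    have : ((q.out : ↥S) : G)⁻¹ * (g * n) ∈ H := hcoset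
    exact hNsep q n (hn q) ⟨hgnS, this⟩
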